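/- Let I, I', V, V', D : ℤ → ℂ be functions, all of whose values are nonzero, such that for every m: D_m = (V_m / I'_{m−1})(1 + D_{m−1}), I_m = V_m (1 + D_m^{−1}), and I_m V'_m = I'_m V_m. Then I_{m+1} = V_{m+1} + I'_m − V'_m for every m. -/

import Mathlib

/-- Lemma 1.1 of the paper in recursive form. -/
theorem dKP_from_D_recursion (I I' V V' D : ℤ → ℂ)
    (hI : ∀ m, I m ≠ 0) (hI' : ∀ m, I' m ≠ 0)
    (hV : ∀ m, V m ≠ 0) (hV' : ∀ m, V' m ≠ 0) (hD : ∀ m, D m ≠ 0)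
    (hrec : ∀ m, D m = V m / I' (m - 1) * (1 + D (m - 1)))
    (hIV : ∀ m, I m = V m * (1 + (D m)⁻¹))
    (hcons : ∀ m, I m * V' m = I' m * V m) :
    ∀ m, I (m + 1) = V (m + 1) + I' m - V' m := by
  intro m
  have e1 : (1 + D m) * V' m = I' m * D m := by
    have h := hcons m
    rw [hIV m] at h
    field_simp [hD m] at h
    exact mul_left_cancel₀ (hV m) (by linear_combination h)
  have hne : (1 : ℂ) + D m ≠ 0 := by
    intro h0
    apply mul_ne_zero (hI' m) (hD m)
    rw [← e1, h0, zero_mul]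
  have hD1 : D (m + 1) = V (m + 1) / I' m * (1 + D m) := by
    have := hrec (m + 1)
    simpa using this
  have hDne := hD (m + 1)
  rw [hIV (m + 1)]
  rw [hD1]
  field_simp [hV (m+1), hI' m, hne]
  linear_combination e1
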